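/- Define ψ^n(p) = Σ_{k=0}^n (C(n,k) p^k (1-p)^{n-k})^2 and, for 0 ≤ u ≤ n/4, φ^n(u) = ψ^n((1 - sqrt(1 - 4u/n))/2). Then for fixed u ≥ 0 the sequence n ↦ φ^n(u) is monotone increasing in n over all integers n ≥ 4u. -/

import Mathlib

/-- `ψⁿ(p) = Σ_{k=0}^n (C(n,k) pᵏ (1-p)ⁿ⁻ᵏ)²`. -/
noncomputable def psi (n : ℕ) (p : ℝ) : ℝ :=
  ∑ k ∈ Finset.range (n + 1), ((n.choose k : ℝ) * p ^ k * (1 - p) ^ (n - k)) ^ 2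

open Complex in
lemma aux_exp_int (d : ℤ) :
    (∫ θ in (0:ℝ)..(2*Real.pi), Complex.exp ((d * I) * θ)) =
      if d = 0 then (2*Real.pi : ℂ) else 0 := by
  rcases eq_or_ne d 0 with h | h
  · simp [h, mul_comm]
  · rw [if_neg h]
    rw [integral_exp_mul_complex (by simp [h, Complex.I_ne_zero])]
    have h1 : (d:ℂ) * I * ((2*Real.pi : ℝ) : ℂ) = d * (2 * Real.pi * I) := by push_cast; ring
    rw [h1, Complex.exp_int_mul_two_pi_mul_I]
    simp

open Complex Finset in
lemma psi_integral (n : ℕ) (p : ℝ) :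
    (∫ θ in (0:ℝ)..(2*Real.pi), ((1:ℝ) - 2*p*(1-p)*(1 - Real.cos θ))^n)
      = 2*Real.pi * psi n p := by
  set c : ℕ → ℝ := fun j => (n.choose j : ℝ) * p^j * (1-p)^(n-j) with hc
  have hA : ∀ θ : ℝ,
      ((((1:ℝ) - 2*p*(1-p)*(1 - Real.cos θ))^n : ℝ) : ℂ)
      = ∑ j ∈ range (n+1), ∑ k ∈ range (n+1),
          ((c j : ℝ) : ℂ) * ((c k : ℝ) : ℂ) *
          Complex.exp (((((j:ℤ) - (k:ℤ)) : ℤ) * I) * θ) := by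
    intro θ
    have h1 : Complex.exp (I*θ) = (Real.cos θ : ℂ) + (Real.sin θ:ℂ) * I := by
      rw [mul_comm, Complex.exp_mul_I, Complex.ofReal_cos, Complex.ofReal_sin]
    have h2 : Complex.exp (-(I*θ)) = (Real.cos θ : ℂ) - (Real.sin θ:ℂ) * I := by
      have h3 : -(I*(θ:ℂ)) = ((-θ : ℝ):ℂ) * I := by push_cast; ring
      rw [h3, Complex.exp_mul_I, Complex.ofReal_neg, Complex.cos_neg, Complex.sin_neg,
        Complex.ofReal_cos, Complex.ofReal_sin]
      ring
    have hsc : (Complex.sin θ)^2 + (Complex.cos θ)^2 = 1 := Complex.sin_sq_add_cos_sq _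
    have base : (((1:ℝ) - 2*p*(1-p)*(1 - Real.cos θ) : ℝ) : ℂ)
        = (((1-p:ℝ):ℂ) + p * Complex.exp (I*θ)) * (((1-p:ℝ):ℂ) + p * Complex.exp (-(I*θ))) := by
      rw [h1, h2]
      push_cast
      linear_combination ((p:ℂ) * Complex.sin θ)^2 * Complex.I_sq - (p:ℂ)^2 * hsc
    have e1 : (((1-p:ℝ):ℂ) + p * Complex.exp (I*θ))^n
        = ∑ j ∈ range (n+1), ((c j : ℝ) : ℂ) * Complex.exp (I*θ)^j := by
      rw [add_comm, add_pow]
      refine Finset.sum_congr rfl fun j _ => ?_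
      simp only [hc]
      push_cast
      ring
    have e2 : (((1-p:ℝ):ℂ) + p * Complex.exp (-(I*θ)))^n
        = ∑ k ∈ range (n+1), ((c k : ℝ) : ℂ) * Complex.exp (-(I*θ))^k := by
      rw [add_comm, add_pow]
      refine Finset.sum_congr rfl fun k _ => ?_
      simp only [hc]
      push_cast
      ring
    rw [Complex.ofReal_pow, base, mul_pow, e1, e2, Finset.sum_mul_sum]
    refine Finset.sum_congr rfl fun j hj => Finset.sum_congr rfl fun k hk => ?_
    have h4 : Complex.exp (I*θ)^j * Complex.exp (-(I*θ))^k
        = Complex.exp (((((j:ℤ) - (k:ℤ)) : ℤ) * I) * θ) := by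
      rw [← Complex.exp_nat_mul, ← Complex.exp_nat_mul, ← Complex.exp_add]
      congr 1
      push_cast
      ring
    rw [← h4]; ring
  have hC : (∫ θ in (0:ℝ)..(2*Real.pi), ((((1:ℝ) - 2*p*(1-p)*(1 - Real.cos θ))^n : ℝ) : ℂ))
      = ((2*Real.pi * psi n p : ℝ) : ℂ) := by
    rw [intervalIntegral.integral_congr (g := fun θ => ∑ j ∈ range (n+1), ∑ k ∈ range (n+1),
          ((c j : ℝ) : ℂ) * ((c k : ℝ) : ℂ) *
          Complex.exp (((((j:ℤ) - (k:ℤ)) : ℤ) * I) * θ)) (fun θ _ => hA θ)]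
    rw [intervalIntegral.integral_finset_sum (fun j _ =>
      Continuous.intervalIntegrable (continuous_finset_sum _ fun k _ => by fun_prop) _ _)]
    have : ∀ j ∈ range (n+1), (∫ θ in (0:ℝ)..(2*Real.pi), ∑ k ∈ range (n+1),
          ((c j : ℝ) : ℂ) * ((c k : ℝ) : ℂ) *
          Complex.exp (((((j:ℤ) - (k:ℤ)) : ℤ) * I) * θ))
        = ((c j : ℝ) : ℂ)^2 * (2*Real.pi : ℝ) := by
      intro j hj
      rw [intervalIntegral.integral_finset_sum (fun k _ =>
        (Continuous.intervalIntegrable (by fun_prop) _ _))]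
      have h5 : ∀ k ∈ range (n+1), (∫ θ in (0:ℝ)..(2*Real.pi),
            ((c j : ℝ) : ℂ) * ((c k : ℝ) : ℂ) *
            Complex.exp (((((j:ℤ) - (k:ℤ)) : ℤ) * I) * θ))
          = if k = j then ((c j : ℝ) : ℂ)^2 * (2*Real.pi : ℝ) else 0 := by
        intro k _
        rw [intervalIntegral.integral_const_mul, aux_exp_int]
        rcases eq_or_ne k j with h | h
        · subst h; simp [sq]
        · rw [if_neg (by omega), if_neg h, mul_zero]
      rw [Finset.sum_congr rfl h5, Finset.sum_ite_eq' (range (n+1)) j]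
      rw [if_pos hj]
    rw [Finset.sum_congr rfl this, ← Finset.sum_mul]
    rw [show ((2*Real.pi * psi n p : ℝ) : ℂ) = ((psi n p : ℝ):ℂ) * ((2*Real.pi:ℝ):ℂ) by
      push_cast; ring]
    congr 1
    unfold psi
    simp only [hc]
    push_cast
    rfl
  have := hC
  rw [intervalIntegral.integral_ofReal] at this
  exact_mod_cast this

/-- `pⁿ(u) = (1 - √(1 - 4u/n))/2`, a root of `p(1-p) = u/n`. -/
noncomputable def pn (n : ℕ) (u : ℝ) : ℝ := (1 - Real.sqrt (1 - 4 * u / n)) / 2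

/-- `φⁿ(u) = ψⁿ(pⁿ(u))`. -/
noncomputable def phi (n : ℕ) (u : ℝ) : ℝ := psi n (pn n u)

lemma pow_le_pow_aux {a : ℝ} {m n : ℕ} (ha : 0 ≤ a) (ham : a ≤ m) (hmn : m ≤ n) :
    (1 - a/m)^m ≤ (1 - a/n)^n := by
  rcases Nat.eq_zero_or_pos m with hm0 | hm0
  · subst hm0
    have h0 : a = 0 := le_antisymm (by exact_mod_cast ham) ha
    subst h0; simp
  have hn0 : 0 < n := lt_of_lt_of_le hm0 hmn
  have hmR : (0:ℝ) < m := by exact_mod_cast hm0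
  have hnR : (0:ℝ) < n := by exact_mod_cast hn0
  have hx : (0:ℝ) ≤ 1 - a/m := by
    rw [sub_nonneg, div_le_one hmR]; exact ham
  have hw1 : (0:ℝ) ≤ (m:ℝ)/n := by positivity
  have hw2 : (0:ℝ) ≤ ((n:ℝ)-m)/n := by
    apply div_nonneg _ hnR.le; rw [sub_nonneg]; exact_mod_cast hmn
  have hw : (m:ℝ)/n + ((n:ℝ)-m)/n = 1 := by field_simp; ring
  have h := Real.geom_mean_le_arith_mean2_weighted hw1 hw2 hx zero_le_one hw
  rw [Real.one_rpow, mul_one, mul_one] at h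
  have harith : (m:ℝ)/n*(1-a/m) + ((n:ℝ)-m)/n = 1 - a/n := by field_simp; ring
  rw [harith] at h
  have hfin : ((1 - a/m) ^ ((m:ℝ)/n)) ^ n ≤ (1 - a/n) ^ n :=
    pow_le_pow_left₀ (Real.rpow_nonneg hx _) h n
  calc (1-a/m)^m = ((1 - a/m) ^ ((m:ℝ)/n)) ^ n := by
        rw [← Real.rpow_natCast ((1 - a/m) ^ ((m:ℝ)/n)) n, ← Real.rpow_mul hx,
          div_mul_cancel₀ _ hnR.ne', Real.rpow_natCast]
    _ ≤ _ := hfin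

lemma phi_eq (k : ℕ) (u : ℝ) (hk : 4*u ≤ (k:ℝ)) (hk0 : 0 < k) :
    2*Real.pi * phi k u
      = ∫ θ in (0:ℝ)..(2*Real.pi), ((1:ℝ) - (2*u/k)*(1 - Real.cos θ))^k := by
  have hkR : (0:ℝ) < k := by exact_mod_cast hk0
  have hs : Real.sqrt (1 - 4*u/k) ^ 2 = 1 - 4*u/k :=
    Real.sq_sqrt (by rw [sub_nonneg, div_le_one hkR]; exact hk)
  have hpq : 2 * pn k u * (1 - pn k u) = 2*u/k := by
    unfold pn
    linear_combination (-1/2 : ℝ) * hs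
  rw [phi, ← psi_integral]
  simp_rw [← hpq]

theorem phi_monotone_in_n (u : ℝ) (hu : 0 ≤ u) (m n : ℕ)
    (hm : 4 * u ≤ (m : ℝ)) (hmn : m ≤ n) :
    phi m u ≤ phi n u := by
  rcases eq_or_lt_of_le hu with h0 | hupos
  · obtain rfl : u = 0 := h0.symm
    have hphi : ∀ k : ℕ, phi k 0 = 1 := by
      intro k
      have hp : pn k 0 = 0 := by simp [pn]
      rw [phi, hp, psi, Finset.sum_eq_single 0]
      · simp
      · intro j _ hj0
        simp [zero_pow hj0]
      · simp
    rw [hphi, hphi]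
  · have hm0 : 0 < m := by
      by_contra h
      push_neg at h
      interval_cases m
      · simp at hm; linarith
    have hn0 : 0 < n := lt_of_lt_of_le hm0 hmn
    have hn4 : 4*u ≤ (n:ℝ) := le_trans hm (by exact_mod_cast hmn)
    have hint : (∫ θ in (0:ℝ)..(2*Real.pi), ((1:ℝ) - (2*u/m)*(1 - Real.cos θ))^m)
        ≤ ∫ θ in (0:ℝ)..(2*Real.pi), ((1:ℝ) - (2*u/n)*(1 - Real.cos θ))^n := by
      apply intervalIntegral.integral_mono_on (by positivity)
        (Continuous.intervalIntegrable (by fun_prop) _ _)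
        (Continuous.intervalIntegrable (by fun_prop) _ _)
      intro θ _
      have hcos : Real.cos θ ≤ 1 := Real.cos_le_one θ
      have hcos' : -1 ≤ Real.cos θ := Real.neg_one_le_cos θ
      have ha : 0 ≤ 2*u*(1 - Real.cos θ) := by nlinarith
      have ham : 2*u*(1 - Real.cos θ) ≤ (m:ℝ) := by nlinarith
      have e1 : (1:ℝ) - (2*u/m)*(1 - Real.cos θ) = 1 - (2*u*(1 - Real.cos θ))/m := by ring
      have e2 : (1:ℝ) - (2*u/n)*(1 - Real.cos θ) = 1 - (2*u*(1 - Real.cos θ))/n := by ring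
      rw [e1, e2]
      exact pow_le_pow_aux ha ham hmn
    rw [← phi_eq m u hm hm0, ← phi_eq n u hn4 hn0] at hint
    have hpi : (0:ℝ) < 2*Real.pi := by positivity
    exact (mul_le_mul_iff_right₀ hpi).mp hint
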